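/- There is a constant C > 0 such that for every n and every set S of n points in the plane ℝ² spanning at least one nondegenerate triangle, with A > 0 the minimum area over all nondegenerate triangles spanned by S, the number of unordered triples of distinct points of S that form an acute triangle of area exactly A is at most C · n. -/

import Mathlib

open scoped Classical

/-- The plane `ℝ²`. -/
noncomputable abbrev Plane := EuclideanSpace ℝ (Fin 2)

/-- Area of the triangle with vertices `a b c` in the plane:
`(1/2)·|det(b − a, c − a)|`. -/
noncomputable def triArea2 (a b c : Plane) : ℝ :=
  |(b 0 - a 0) * (c 1 - a 1) - (b 1 - a 1) * (c 0 - a 0)| / 2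

/-- The set of areas of nondegenerate triangles spanned by `S`. -/
def posAreaSet2 (S : Finset Plane) : Set ℝ :=
  {x : ℝ | ∃ a ∈ S, ∃ b ∈ S, ∃ c ∈ S, 0 < triArea2 a b c ∧ triArea2 a b c = x}

/-- A triangle is acute if all three interior angles are strictly less than
`π/2`. -/
def IsAcuteTriangle (a b c : Plane) : Prop :=
  EuclideanGeometry.angle b a c < Real.pi / 2 ∧
  EuclideanGeometry.angle a b c < Real.pi / 2 ∧
  EuclideanGeometry.angle a c b < Real.pi / 2

/-- The number of unordered triples of distinct points of `S` that span an
acute triangle of area exactly `A`. -/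
noncomputable def acuteAreaTripleCount2 (S : Finset Plane) (A : ℝ) : ℕ :=
  Set.ncard {T : Finset Plane | T ⊆ S ∧ T.card = 3 ∧
    ∃ a b c : Plane, T = {a, b, c} ∧ triArea2 a b c = A ∧ IsAcuteTriangle a b c}

noncomputable def det2 (u v : Plane) : ℝ := u 0 * v 1 - u 1 * v 0
noncomputable def dot2 (u v : Plane) : ℝ := u 0 * v 0 + u 1 * v 1
noncomputable def n2 (u : Plane) : ℝ := dot2 u u

lemma areaEq (a b c : Plane) : triArea2 a b c = |det2 (b - a) (c - a)| / 2 := by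
  simp [triArea2, det2, PiLp.sub_apply]

lemma angle_lt_dot {a b c : Plane} (h : EuclideanGeometry.angle b a c < Real.pi / 2) :
    0 < dot2 (b - a) (c - a) := by
  rw [EuclideanGeometry.angle, vsub_eq_sub, vsub_eq_sub] at h
  rw [InnerProductGeometry.angle, Real.arccos_lt_pi_div_two] at h
  have h2 : (0:ℝ) < (inner ℝ (b - a) (c - a) : ℝ) := by
    rcases div_pos_iff.mp h with ⟨h1, _⟩ | ⟨_, h2⟩
    · exact h1
    · nlinarith [norm_nonneg (b - a), norm_nonneg (c - a)]
  have : (inner ℝ (b - a) (c - a) : ℝ) = dot2 (b - a) (c - a) := by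
    simp [PiLp.inner_apply, Fin.sum_univ_two, dot2, RCLike.inner_apply, mul_comm]
  linarith [this ▸ h2]

lemma coord_sub (x y : Plane) (i : Fin 2) : (x - y) i = x i - y i := rfl
lemma coord_smul (t : ℝ) (x : Plane) (i : Fin 2) : (t • x) i = t * x i := rfl

lemma acute_dots {a b c : Plane} (h : IsAcuteTriangle a b c) :
    0 < dot2 (b - a) (c - a) ∧ 0 < dot2 (a - b) (c - b) ∧ 0 < dot2 (a - c) (b - c) :=
  ⟨angle_lt_dot h.1, angle_lt_dot h.2.1, angle_lt_dot h.2.2⟩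

lemma area_swap23 (a b c : Plane) : triArea2 a b c = triArea2 a c b := by
  rw [areaEq, areaEq, show det2 (b - a) (c - a) = -det2 (c - a) (b - a) by
    simp only [det2, coord_sub]; ring, abs_neg]

lemma area_swap12 (a b c : Plane) : triArea2 a b c = triArea2 b a c := by
  rw [areaEq, areaEq, show det2 (b - a) (c - a) = -det2 (a - b) (c - b) by
    simp only [det2, coord_sub]; ring, abs_neg]

lemma area_rot (a b c : Plane) : triArea2 a b c = triArea2 b c a := by
  rw [area_swap12, area_swap23]

lemma acute_swap12 {a b c : Plane} (h : IsAcuteTriangle a b c) : IsAcuteTriangle b a c :=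
  ⟨h.2.1, h.1, (EuclideanGeometry.angle_comm b c a) ▸ h.2.2⟩

lemma acute_swap23 {a b c : Plane} (h : IsAcuteTriangle a b c) : IsAcuteTriangle a c b :=
  ⟨(EuclideanGeometry.angle_comm b a c) ▸ h.1, h.2.2, h.2.1⟩

lemma acute_rot {a b c : Plane} (h : IsAcuteTriangle a b c) : IsAcuteTriangle b c a :=
  acute_swap23 (acute_swap12 h)

/-- In 2D, parallel to a nonzero vector means a multiple of it. -/
lemma parallel_of_det2 {u v : Plane} (hd : det2 u v = 0) (hu : u ≠ 0) :
    ∃ μ : ℝ, v = μ • u := by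
  have h0 : u 0 ≠ 0 ∨ u 1 ≠ 0 := by
    by_contra h
    push_neg at h
    apply hu
    ext i
    fin_cases i <;> simp [h.1, h.2]
  rcases h0 with h0 | h1
  · refine ⟨v 0 / u 0, ?_⟩
    ext i
    fin_cases i <;> simp only [coord_smul, Fin.zero_eta, Fin.mk_one]
    · field_simp
    · simp only [det2] at hd; field_simp; nlinarith [hd]
  · refine ⟨v 1 / u 1, ?_⟩
    ext i
    fin_cases i <;> simp only [coord_smul, Fin.zero_eta, Fin.mk_one]
    · simp only [det2] at hd; field_simp; nlinarith [hd]
    · field_simp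

lemma lagrange (u v : Plane) : dot2 u v ^ 2 + det2 u v ^ 2 = n2 u * n2 v := by
  simp only [dot2, det2, n2]; ring

lemma plane_ext {u v : Plane} (h0 : u 0 = v 0) (h1 : u 1 = v 1) : u = v := by
  ext i
  fin_cases i
  · exact h0
  · exact h1

lemma finkey {A ρ ρ' X Y s : ℝ} (hA : 0 < A) (hρ : 0 < ρ) (hρ' : 0 < ρ')
    (hX : ρ ^ 2 = X) (hY : ρ' ^ 2 = Y) (hnear : 3 * X ^ 2 ≤ 16 * A ^ 2)
    (hnear' : 3 * Y ^ 2 ≤ 16 * A ^ 2) (hs0 : 0 ≤ s) (hs : s * s < 3 / 4)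
    (hlb : 2 * A ≤ ρ * ρ' * s) : False := by
  have hXpos : 0 < X := by rw [← hX]; exact pow_pos hρ 2
  have hYpos : 0 < Y := by rw [← hY]; exact pow_pos hρ' 2
  have h1 : 4 * A ^ 2 ≤ X * Y * (s * s) := by
    have h := mul_self_le_mul_self (by linarith : (0:ℝ) ≤ 2 * A) hlb
    have e : ρ * ρ' * s * (ρ * ρ' * s) = X * Y * (s * s) := by
      rw [← hX, ← hY]; ring
    linarith [h, e.symm.le, e.le]
  have h2 : 3 * (X * Y) ≤ 16 * A ^ 2 := by nlinarith [sq_nonneg (X - Y)]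
  have h3 : X * Y * (s * s) < X * Y * (3 / 4) :=
    mul_lt_mul_of_pos_left hs (mul_pos hXpos hYpos)
  nlinarith [h1, h2, h3, hA]

noncomputable def planeC (u : Plane) : ℂ := ⟨u 0, u 1⟩
noncomputable def na (u : Plane) : ℝ :=
  if (planeC u).arg < 0 then (planeC u).arg + Real.pi
  else if (planeC u).arg = Real.pi then 0 else (planeC u).arg
noncomputable def ns (u : Plane) : ℝ :=
  if (planeC u).arg < 0 then -1 else if (planeC u).arg = Real.pi then -1 else 1
noncomputable def rho (u : Plane) : ℝ := ‖planeC u‖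

lemma polar (u : Plane) (hu : u ≠ 0) :
    0 ≤ na u ∧ na u < Real.pi ∧ 0 < rho u ∧
    u 0 = ns u * rho u * Real.cos (na u) ∧ u 1 = ns u * rho u * Real.sin (na u) ∧
    (ns u = 1 ∨ ns u = -1) ∧ rho u ^ 2 = n2 u := by
  have hz : planeC u ≠ 0 := by
    intro h
    apply hu
    have h0 : u 0 = 0 := congrArg Complex.re h
    have h1 : u 1 = 0 := congrArg Complex.im h
    ext i; fin_cases i <;> simpa [h0, h1]
  have hre : ‖planeC u‖ * Real.cos (planeC u).arg = u 0 :=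
    Complex.norm_mul_cos_arg (planeC u)
  have him : ‖planeC u‖ * Real.sin (planeC u).arg = u 1 :=
    Complex.norm_mul_sin_arg (planeC u)
  have hρ : 0 < rho u := by
    simpa [rho] using (norm_pos_iff.mpr hz)
  have hn2 : rho u ^ 2 = n2 u := by
    rw [rho, Complex.sq_norm, Complex.normSq_apply]
    simp [planeC, n2, dot2, sq]
  have hlt := Complex.neg_pi_lt_arg (planeC u)
  have hle := Complex.arg_le_pi (planeC u)
  have hπ := Real.pi_pos
  have hrr : rho u = ‖planeC u‖ := rfl
  by_cases h1 : (planeC u).arg < 0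
  · simp only [na, ns, if_pos h1]
    refine ⟨by linarith, by linarith, hρ, ?_, ?_, by tauto, hn2⟩
    · rw [Real.cos_add_pi, ← hre, hrr]; ring
    · rw [Real.sin_add_pi, ← him, hrr]; ring
  · by_cases h2 : (planeC u).arg = Real.pi
    · simp only [na, ns, if_neg h1, if_pos h2]
      refine ⟨le_refl 0, hπ, hρ, ?_, ?_, by tauto, hn2⟩
      · rw [Real.cos_zero, ← hre, hrr, h2, Real.cos_pi]; ring
      · rw [Real.sin_zero, ← him, hrr, h2, Real.sin_pi]; ring
    · simp only [na, ns, if_neg h1, if_neg h2]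
      push_neg at h1
      refine ⟨h1, lt_of_le_of_ne hle h2, hρ, ?_, ?_, by tauto, hn2⟩
      · rw [← hre, hrr]; ring
      · rw [← him, hrr]; ring

section Core

variable {S : Finset Plane} {A : ℝ}

lemma minlb (hL : IsLeast (posAreaSet2 S) A) {p q r : Plane}
    (hp : p ∈ S) (hq : q ∈ S) (hr : r ∈ S) (h : 0 < triArea2 p q r) :
    A ≤ triArea2 p q r := hL.2 ⟨p, hp, q, hq, r, hr, h, rfl⟩

lemma det_lb (hL : IsLeast (posAreaSet2 S) A) {p q r : Plane}
    (hp : p ∈ S) (hq : q ∈ S) (hr : r ∈ S) (hd : det2 (q - p) (r - p) ≠ 0) :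
    2 * A ≤ |det2 (q - p) (r - p)| := by
  have h0 : 0 < triArea2 p q r := by
    rw [areaEq]
    have := abs_pos.mpr hd
    linarith
  have := minlb hL hp hq hr h0
  rw [areaEq] at this
  linarith

lemma ray_contra (hA : 0 < A) (hL : IsLeast (posAreaSet2 S) A) {c a a' b' : Plane}
    (ha : a ∈ S) (ha' : a' ∈ S) (hb' : b' ∈ S) {τ : ℝ} (hτ0 : 0 < τ) (hτ1 : τ < 1)
    (hu0 : a 0 = c 0 + τ * (a' 0 - c 0)) (hu1 : a 1 = c 1 + τ * (a' 1 - c 1))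
    (hdet : |det2 (a' - c) (b' - c)| = 2 * A) : False := by
  have hkey : det2 (a' - a) (b' - a) = (1 - τ) * det2 (a' - c) (b' - c) := by
    simp only [det2, coord_sub]
    rw [hu0, hu1]; ring
  have harea : triArea2 a a' b' = (1 - τ) * A := by
    rw [areaEq, hkey, abs_mul, abs_of_nonneg (by linarith : (0:ℝ) ≤ 1 - τ), hdet]
    ring
  have hpos : 0 < triArea2 a a' b' := by rw [harea]; nlinarith
  have := minlb hL ha ha' hb' hpos
  rw [harea] at this
  nlinarith

lemma fiber_contra (hA : 0 < A) (hL : IsLeast (posAreaSet2 S) A) {c a b b' : Plane}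
    (ha : a ∈ S) (hb : b ∈ S) (hb' : b' ∈ S) (hbb' : b ≠ b')
    (hd : det2 (a - c) (b - c) = det2 (a - c) (b' - c))
    (habs : |det2 (a - c) (b - c)| = 2 * A)
    (ht0 : 0 < dot2 (a - c) (b - c)) (ht1 : dot2 (a - c) (b - c) < n2 (a - c))
    (ht0' : 0 < dot2 (a - c) (b' - c)) (ht1' : dot2 (a - c) (b' - c) < n2 (a - c)) :
    False := by
  have hn2pos : 0 < n2 (a - c) := lt_trans ht0 ht1
  have hune : (a - c) ≠ 0 := by
    intro h
    rw [h] at hn2pos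
    simp [n2, dot2] at hn2pos
  have hdet0 : det2 (a - c) (b - b') = 0 := by
    have expand : det2 (a - c) (b - b') =
        det2 (a - c) (b - c) - det2 (a - c) (b' - c) := by
      simp only [det2, coord_sub]; ring
    rw [expand, hd, sub_self]
  obtain ⟨μ, hμ⟩ := parallel_of_det2 hdet0 hune
  have hco : ∀ i, b i - b' i = μ * (a i - c i) := by
    intro i
    have := congrArg (fun x => x i) hμ
    simpa [coord_sub, coord_smul] using this
  have hdotμ : dot2 (a - c) (b - c) - dot2 (a - c) (b' - c) = μ * n2 (a - c) := by
    simp only [dot2, n2, coord_sub]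
    have h0 := hco 0; have h1 := hco 1
    linear_combination (a 0 - c 0) * h0 + (a 1 - c 1) * h1
  have hμ1 : -1 < μ ∧ μ < 1 := by
    constructor <;> nlinarith
  have hμ0 : μ ≠ 0 := by
    intro h
    apply hbb'
    rw [h, zero_smul] at hμ
    exact sub_eq_zero.mp hμ
  have hkey : det2 (b - a) (b' - a) = μ * det2 (a - c) (b - c) := by
    have e0 : b' 0 = b 0 - μ * (a 0 - c 0) := by linarith [hco 0]
    have e1 : b' 1 = b 1 - μ * (a 1 - c 1) := by linarith [hco 1]
    simp only [det2, coord_sub]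
    rw [e0, e1]; ring
  have harea : triArea2 a b b' = |μ| * A := by
    rw [areaEq, hkey, abs_mul, habs]; ring
  have hpos : 0 < triArea2 a b b' := by
    rw [harea]
    exact mul_pos (abs_pos.mpr hμ0) hA
  have := minlb hL ha hb hb' hpos
  rw [harea] at this
  have : |μ| < 1 := abs_lt.mpr hμ1
  nlinarith [abs_pos.mpr hμ0, this, minlb hL ha hb hb' hpos, harea]

lemma near_sq {u v : Plane} (hA : 0 < A) (habs : |det2 u v| = 2 * A)
    (ht0 : 0 < dot2 u v) (hside : 2 * dot2 u v ≤ n2 u) (huv : n2 u ≤ n2 v) :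
    3 * n2 u ^ 2 ≤ 16 * A ^ 2 := by
  have hl := lagrange u v
  have h4 : det2 u v ^ 2 = 4 * A ^ 2 := by
    rw [← sq_abs, habs]; ring
  nlinarith [sq_nonneg (dot2 u v), sq_nonneg (n2 u - 2 * dot2 u v)]

end Core

def Good (S : Finset Plane) (A : ℝ) (c a b : Plane) : Prop :=
  a ∈ S ∧ b ∈ S ∧ a ≠ c ∧ b ≠ c ∧ a ≠ b ∧ triArea2 a b c = A ∧ IsAcuteTriangle a b c ∧
  n2 (b - c) ≤ n2 (b - a) ∧ n2 (a - c) ≤ n2 (b - c)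

section Core2

variable {S : Finset Plane} {A : ℝ}

lemma good_facts {c a b : Plane} (h : Good S A c a b) :
    |det2 (a - c) (b - c)| = 2 * A ∧ 0 < dot2 (a - c) (b - c) ∧
    dot2 (a - c) (b - c) < n2 (a - c) ∧ 2 * dot2 (a - c) (b - c) ≤ n2 (a - c) ∧
    n2 (a - c) ≤ n2 (b - c) := by
  obtain ⟨ha, hb, hac, hbc, hab, harea, hacute, hs1, hs2⟩ := h
  obtain ⟨d1, d2, d3⟩ := acute_dots hacute
  refine ⟨?_, d3, ?_, ?_, hs2⟩
  · have h2 : triArea2 c a b = A := (area_rot c a b).trans harea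
    rw [areaEq] at h2
    linarith
  · have key : dot2 (b - a) (c - a) = n2 (a - c) - dot2 (a - c) (b - c) := by
      simp only [dot2, n2, coord_sub]; ring
    rw [key] at d1
    linarith
  · have key : n2 (b - a) = n2 (b - c) - 2 * dot2 (a - c) (b - c) + n2 (a - c) := by
      simp only [n2, dot2, coord_sub]; ring
    linarith


lemma near_pair (hA : 0 < A) (hL : IsLeast (posAreaSet2 S) A) {c a b a' b' : Plane}
    (hc : c ∈ S) (hg : Good S A c a b) (hg' : Good S A c a' b') (haa' : a ≠ a')
    (hbk : ⌊3 * na (a - c) / Real.pi⌋ = ⌊3 * na (a' - c) / Real.pi⌋)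
    (hsg : ns (a - c) = ns (a' - c)) : False := by
  have gf := good_facts hg
  have gf' := good_facts hg'
  have hune : a - c ≠ 0 := sub_ne_zero.mpr hg.2.2.1
  have hune' : a' - c ≠ 0 := sub_ne_zero.mpr hg'.2.2.1
  obtain ⟨hθ0, hθπ, hρ, he0, he1, hσ, hρn⟩ := polar _ hune
  obtain ⟨hθ0', hθπ', hρ', he0', he1', hσ', hρn'⟩ := polar _ hune'
  have hnear : 3 * (n2 (a - c)) ^ 2 ≤ 16 * A ^ 2 :=
    near_sq hA gf.1 gf.2.1 gf.2.2.2.1 gf.2.2.2.2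
  have hnear' : 3 * (n2 (a' - c)) ^ 2 ≤ 16 * A ^ 2 :=
    near_sq hA gf'.1 gf'.2.1 gf'.2.2.2.1 gf'.2.2.2.2
  have hπ := Real.pi_pos
  by_cases hθeq : na (a - c) = na (a' - c)
  · by_cases hρeq : rho (a - c) = rho (a' - c)
    · apply haa'
      have hsub : a - c = a' - c := by
        apply plane_ext
        · rw [he0, he0', hsg, hρeq, hθeq]
        · rw [he1, he1', hsg, hρeq, hθeq]
      have := congrArg (· + c) hsub
      simpa using this
    · have w0 : a 0 - c 0 = ns (a - c) * rho (a - c) * Real.cos (na (a - c)) := he0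
      have w1 : a 1 - c 1 = ns (a - c) * rho (a - c) * Real.sin (na (a - c)) := he1
      have w0' : a' 0 - c 0 = ns (a - c) * rho (a' - c) * Real.cos (na (a - c)) := by
        rw [hsg, hθeq]; exact he0'
      have w1' : a' 1 - c 1 = ns (a - c) * rho (a' - c) * Real.sin (na (a - c)) := by
        rw [hsg, hθeq]; exact he1'
      rcases lt_or_gt_of_ne hρeq with hlt | hgt
      · refine ray_contra hA hL hg.1 hg'.1 hg'.2.1
          (τ := rho (a - c) / rho (a' - c)) (div_pos hρ hρ')
          ((div_lt_one hρ').mpr hlt) ?_ ?_ gf'.1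
        · have key0 : rho (a - c) / rho (a' - c) * (a' 0 - c 0) = a 0 - c 0 := by
            rw [w0', w0]; field_simp
          linarith [key0]
        · have key1 : rho (a - c) / rho (a' - c) * (a' 1 - c 1) = a 1 - c 1 := by
            rw [w1', w1]; field_simp
          linarith [key1]
      · refine ray_contra hA hL hg'.1 hg.1 hg.2.1
          (τ := rho (a' - c) / rho (a - c)) (div_pos hρ' hρ)
          ((div_lt_one hρ).mpr hgt) ?_ ?_ gf.1
        · have key0 : rho (a' - c) / rho (a - c) * (a 0 - c 0) = a' 0 - c 0 := by
            rw [w0', w0]; field_simp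
          linarith [key0]
        · have key1 : rho (a' - c) / rho (a - c) * (a 1 - c 1) = a' 1 - c 1 := by
            rw [w1', w1]; field_simp
          linarith [key1]
  · -- different directions
    have hdlt : |na (a' - c) - na (a - c)| < Real.pi / 3 := by
      have h1 : |3 * na (a - c) / Real.pi - 3 * na (a' - c) / Real.pi| < 1 :=
        Int.abs_sub_lt_one_of_floor_eq_floor hbk
      have h2 : 3 * na (a - c) / Real.pi - 3 * na (a' - c) / Real.pi =
          -(3 / Real.pi) * (na (a' - c) - na (a - c)) := by
        field_simp; ring
      rw [h2, abs_mul, abs_neg, abs_of_pos (by positivity : (0:ℝ) < 3 / Real.pi)] at h1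
      calc |na (a' - c) - na (a - c)|
          = 3 / Real.pi * |na (a' - c) - na (a - c)| * (Real.pi / 3) := by
            field_simp
        _ < 1 * (Real.pi / 3) := mul_lt_mul_of_pos_right h1 (by positivity)
        _ = Real.pi / 3 := one_mul _
    obtain ⟨hd1, hd2⟩ := abs_lt.mp hdlt
    have hdne0 : na (a' - c) - na (a - c) ≠ 0 := fun h => hθeq (by linarith [sub_eq_zero.mp h])
    have hσ2 : ns (a - c) * ns (a - c) = 1 := by
      rcases hσ with h | h <;> rw [h] <;> norm_num
    have hdet : det2 (a - c) (a' - c) =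
        rho (a - c) * rho (a' - c) * Real.sin (na (a' - c) - na (a - c)) := by
      simp only [det2]
      rw [he0, he1, he0', he1', ← hsg, Real.sin_sub]
      linear_combination (rho (a - c) * rho (a' - c) *
        (Real.cos (na (a - c)) * Real.sin (na (a' - c)) -
         Real.sin (na (a - c)) * Real.cos (na (a' - c)))) * hσ2
    have hsind : Real.sin (na (a' - c) - na (a - c)) ≠ 0 := by
      intro hs
      exact hdne0 ((Real.sin_eq_zero_iff_of_lt_of_lt (by linarith) (by linarith)).mp hs)
    have hdne : det2 (a - c) (a' - c) ≠ 0 := by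
      rw [hdet]
      exact mul_ne_zero (mul_ne_zero (ne_of_gt hρ) (ne_of_gt hρ')) hsind
    have hlb := det_lb hL hc hg.1 hg'.1 hdne
    rw [hdet, abs_mul, abs_mul, abs_of_pos hρ, abs_of_pos hρ'] at hlb
    have habs_sin : |Real.sin (na (a' - c) - na (a - c))| =
        Real.sin |na (a' - c) - na (a - c)| := by
      rcases le_or_gt 0 (na (a' - c) - na (a - c)) with h | h
      · rw [abs_of_nonneg h,
          abs_of_nonneg (Real.sin_nonneg_of_nonneg_of_le_pi h (by linarith))]
      · rw [abs_of_neg h,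
          show Real.sin (na (a' - c) - na (a - c)) =
            -Real.sin (-(na (a' - c) - na (a - c))) by rw [Real.sin_neg]; ring,
          abs_neg,
          abs_of_nonneg (Real.sin_nonneg_of_nonneg_of_le_pi (by linarith) (by linarith))]
    have hmono : Real.sin |na (a' - c) - na (a - c)| < Real.sin (Real.pi / 3) := by
      have m1 : |na (a' - c) - na (a - c)| ∈ Set.Icc (-(Real.pi / 2)) (Real.pi / 2) :=
        ⟨by linarith [abs_nonneg (na (a' - c) - na (a - c))], by linarith⟩
      have m2 : Real.pi / 3 ∈ Set.Icc (-(Real.pi / 2)) (Real.pi / 2) :=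
        ⟨by linarith, by linarith⟩
      exact Real.strictMonoOn_sin m1 m2 hdlt
    have hsq : |Real.sin (na (a' - c) - na (a - c))| *
        |Real.sin (na (a' - c) - na (a - c))| < 3 / 4 := by
      have h1 : |Real.sin (na (a' - c) - na (a - c))| < Real.sin (Real.pi / 3) := by
        rw [habs_sin]; exact hmono
      have h3 := mul_self_lt_mul_self (abs_nonneg
        (Real.sin (na (a' - c) - na (a - c)))) h1
      have h4 : Real.sin (Real.pi / 3) * Real.sin (Real.pi / 3) = 3 / 4 := by
        rw [← Real.sq_sin_pi_div_three]; ring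
      linarith
    exact finkey hA hρ hρ' hρn hρn' hnear hnear'
      (abs_nonneg _) hsq hlb

end Core2

section Count

variable {S : Finset Plane} {A : ℝ}

lemma n2_comm (x y : Plane) : n2 (x - y) = n2 (y - x) := by
  simp only [n2, dot2, coord_sub]; ring

lemma card3 {a b c : Plane} (h : ({a, b, c} : Finset Plane).card = 3) :
    a ≠ b ∧ a ≠ c ∧ b ≠ c := by
  refine ⟨?_, ?_, ?_⟩ <;> intro e
  · rw [e, Finset.insert_idem] at h
    have h2 := Finset.card_insert_le b ({c} : Finset Plane)
    simp at h2
    omega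
  · rw [e, Finset.insert_eq_self.mpr (by simp)] at h
    have h2 := Finset.card_insert_le b ({c} : Finset Plane)
    simp at h2
    omega
  · rw [e, show ({c, c} : Finset Plane) = {c} by simp] at h
    have h2 := Finset.card_insert_le a ({c} : Finset Plane)
    simp at h2
    omega

lemma exists_good {a b c : Plane} (ha : a ∈ S) (hb : b ∈ S) (hc : c ∈ S)
    (hab : a ≠ b) (hac : a ≠ c) (hbc : b ≠ c)
    (harea : triArea2 a b c = A) (hacute : IsAcuteTriangle a b c) :
    ∃ a' b' c', c' ∈ S ∧ ({a', b', c'} : Finset Plane) = {a, b, c} ∧ Good S A c' a' b' := by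
  have ar_bac : triArea2 b a c = A := (area_swap12 a b c).symm.trans harea
  have ar_acb : triArea2 a c b = A := (area_swap23 a b c).symm.trans harea
  have ar_cab : triArea2 c a b = A := (area_rot c a b).trans harea
  have ar_bca : triArea2 b c a = A := (area_rot b c a).trans ar_cab
  have ar_cba : triArea2 c b a = A := (area_swap12 b c a).symm.trans ar_bca
  have ac_bac : IsAcuteTriangle b a c := acute_swap12 hacute
  have ac_acb : IsAcuteTriangle a c b := acute_swap23 hacute
  have ac_bca : IsAcuteTriangle b c a := acute_rot hacute
  have ac_cab : IsAcuteTriangle c a b := acute_rot ac_bca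
  have ac_cba : IsAcuteTriangle c b a := acute_swap12 ac_bca
  have e_bac : ({b, a, c} : Finset Plane) = {a, b, c} := by ext x; simp; tauto
  have e_acb : ({a, c, b} : Finset Plane) = {a, b, c} := by ext x; simp; tauto
  have e_cab : ({c, a, b} : Finset Plane) = {a, b, c} := by ext x; simp; tauto
  have e_bca : ({b, c, a} : Finset Plane) = {a, b, c} := by ext x; simp; tauto
  have e_cba : ({c, b, a} : Finset Plane) = {a, b, c} := by ext x; simp; tauto
  have eQ : n2 (c - a) = n2 (a - c) := n2_comm c a
  have eR : n2 (c - b) = n2 (b - c) := n2_comm c b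
  have eP : n2 (b - a) = n2 (a - b) := n2_comm b a
  -- P = n2 (b - a), Q = n2 (c - a), R = n2 (c - b)
  have top1 : n2 (c - a) ≤ n2 (b - a) → n2 (c - b) ≤ n2 (b - a) → (∃ a' b' c', c' ∈ S ∧ ({a', b', c'} : Finset Plane) = {a, b, c} ∧ Good S A c' a' b') := by
    intro hQP hRP
    rcases le_total (n2 (c - a)) (n2 (c - b)) with h3 | h3
    · exact ⟨a, b, c, hc, rfl, ha, hb, hac, hbc, hab, harea, hacute,
        by rw [← eR]; exact hRP, by rw [← eQ, ← eR]; exact h3⟩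
    · exact ⟨b, a, c, hc, e_bac, hb, ha, hbc, hac, hab.symm,
        ar_bac, ac_bac, by rw [← eQ, ← eP]; exact hQP,
        by rw [← eR, ← eQ]; exact h3⟩
  have top2 : n2 (b - a) ≤ n2 (c - a) → n2 (c - b) ≤ n2 (c - a) → (∃ a' b' c', c' ∈ S ∧ ({a', b', c'} : Finset Plane) = {a, b, c} ∧ Good S A c' a' b') := by
    intro hPQ hRQ
    rcases le_total (n2 (b - a)) (n2 (c - b)) with h3 | h3
    · exact ⟨a, c, b, hb, e_acb, ha, hc, hab, hbc.symm, hac,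
        ar_acb, ac_acb, hRQ, by rw [← eP]; exact h3⟩
    · exact ⟨c, a, b, hb, e_cab, hc, ha, hbc.symm, hab, hac.symm,
        ar_cab, ac_cab, by rw [← eP, ← eQ]; exact hPQ,
        by rw [← eP]; exact h3⟩
  have top3 : n2 (b - a) ≤ n2 (c - b) → n2 (c - a) ≤ n2 (c - b) → (∃ a' b' c', c' ∈ S ∧ ({a', b', c'} : Finset Plane) = {a, b, c} ∧ Good S A c' a' b') := by
    intro hPR hQR
    rcases le_total (n2 (b - a)) (n2 (c - a)) with h3 | h3
    · exact ⟨b, c, a, ha, e_bca, hb, hc, hab.symm, hac.symm, hbc,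
        ar_bca, ac_bca, hQR, h3⟩
    · exact ⟨c, b, a, ha, e_cba, hc, hb, hac.symm, hab.symm, hbc.symm,
        ar_cba, ac_cba, by rw [← eR]; exact hPR, h3⟩
  rcases le_total (n2 (c - a)) (n2 (b - a)) with h1 | h1
  · rcases le_total (n2 (c - b)) (n2 (b - a)) with h2 | h2
    · exact top1 h1 h2
    · exact top3 h2 (h1.trans h2)
  · rcases le_total (n2 (c - b)) (n2 (c - a)) with h2 | h2
    · exact top2 h1 h2
    · exact top3 (h1.trans h2) h2

end Count

section Final

variable {S : Finset Plane} {A : ℝ}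

def Pc (S : Finset Plane) (A : ℝ) (c : Plane) (T : Finset Plane) : Prop :=
  ∃ a b, T = {a, b, c} ∧ Good S A c a b

noncomputable def Fc (S : Finset Plane) (A : ℝ) (c : Plane) : Finset (Finset Plane) :=
  S.powerset.filter (fun T => Pc S A c T)

noncomputable def fva (S : Finset Plane) (A : ℝ) (c : Plane) (T : Finset Plane) : Plane :=
  if h : Pc S A c T then h.choose else c

noncomputable def fvb (S : Finset Plane) (A : ℝ) (c : Plane) (T : Finset Plane) : Plane :=
  if h : Pc S A c T then h.choose_spec.choose else c

lemma fv_spec {c : Plane} {T : Finset Plane} (h : Pc S A c T) :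
    T = {fva S A c T, fvb S A c T, c} ∧ Good S A c (fva S A c T) (fvb S A c T) := by
  simp only [fva, fvb, dif_pos h]
  exact h.choose_spec.choose_spec

lemma mem_Fc {c : Plane} {T : Finset Plane} (h : T ∈ Fc S A c) : T ⊆ S ∧ Pc S A c T := by
  rw [Fc, Finset.mem_filter, Finset.mem_powerset] at h
  exact h

lemma fiber_le_two (hA : 0 < A) (hL : IsLeast (posAreaSet2 S) A) (c aa : Plane) :
    ((Fc S A c).filter (fun T => fva S A c T = aa)).card ≤ 2 := by
  by_contra hcon
  push_neg at hcon
  obtain ⟨T1, T2, T3, h1, h2, h3, h12, h13, h23⟩ := Finset.two_lt_card_iff.mp hcon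
  rw [Finset.mem_filter] at h1 h2 h3
  obtain ⟨hm1, he1⟩ := h1
  obtain ⟨hm2, he2⟩ := h2
  obtain ⟨hm3, he3⟩ := h3
  obtain ⟨hs1, hg1⟩ := fv_spec (mem_Fc hm1).2
  obtain ⟨hs2, hg2⟩ := fv_spec (mem_Fc hm2).2
  obtain ⟨hs3, hg3⟩ := fv_spec (mem_Fc hm3).2
  rw [he1] at hs1 hg1
  rw [he2] at hs2 hg2
  rw [he3] at hs3 hg3
  set b1 := fvb S A c T1
  set b2 := fvb S A c T2
  set b3 := fvb S A c T3
  have hb12 : b1 ≠ b2 := fun e => h12 (by rw [hs1, hs2, e])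
  have hb13 : b1 ≠ b3 := fun e => h13 (by rw [hs1, hs3, e])
  have hb23 : b2 ≠ b3 := fun e => h23 (by rw [hs2, hs3, e])
  have kill : ∀ x y : Plane, x ≠ y → Good S A c aa x → Good S A c aa y →
      det2 (aa - c) (x - c) = det2 (aa - c) (y - c) → False := by
    intro x y hne hgx hgy hdd
    have gx := good_facts hgx
    have gy := good_facts hgy
    exact fiber_contra hA hL hgx.1 hgx.2.1 hgy.2.1 hne hdd gx.1 gx.2.1 gx.2.2.1
      gy.2.1 gy.2.2.1
  have habs1 := (good_facts hg1).1
  have habs2 := (good_facts hg2).1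
  have habs3 := (good_facts hg3).1
  have h2A : (0:ℝ) ≤ 2 * A := by linarith
  rcases (abs_eq h2A).mp habs1 with e1 | e1 <;>
    rcases (abs_eq h2A).mp habs2 with e2 | e2 <;>
      rcases (abs_eq h2A).mp habs3 with e3 | e3
  · exact kill b1 b2 hb12 hg1 hg2 (by rw [e1, e2])
  · exact kill b1 b2 hb12 hg1 hg2 (by rw [e1, e2])
  · exact kill b1 b3 hb13 hg1 hg3 (by rw [e1, e3])
  · exact kill b2 b3 hb23 hg2 hg3 (by rw [e2, e3])
  · exact kill b2 b3 hb23 hg2 hg3 (by rw [e2, e3])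
  · exact kill b1 b3 hb13 hg1 hg3 (by rw [e1, e3])
  · exact kill b1 b2 hb12 hg1 hg2 (by rw [e1, e2])
  · exact kill b1 b2 hb12 hg1 hg2 (by rw [e1, e2])

lemma image_le_six (hA : 0 < A) (hL : IsLeast (posAreaSet2 S) A) {c : Plane} (hc : c ∈ S) :
    ((Fc S A c).image (fva S A c)).card ≤ 6 := by
  have hπ := Real.pi_pos
  have key : ∀ aa ∈ (Fc S A c).image (fva S A c), ∃ b : Plane, Good S A c aa b := by
    intro aa haa
    obtain ⟨T, hT, rfl⟩ := Finset.mem_image.mp haa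
    exact ⟨fvb S A c T, (fv_spec (mem_Fc hT).2).2⟩
  calc ((Fc S A c).image (fva S A c)).card
      ≤ ((Finset.Icc (0:ℤ) 2) ×ˢ ({-1, 1} : Finset ℝ)).card := by
        apply Finset.card_le_card_of_injOn
          (fun aa => (⌊3 * na (aa - c) / Real.pi⌋, ns (aa - c)))
        · intro aa haa
          obtain ⟨b, hgood⟩ := key aa haa
          have hne : aa - c ≠ 0 := sub_ne_zero.mpr hgood.2.2.1
          obtain ⟨hθ0, hθπ, -, -, -, hσ, -⟩ := polar _ hne
          rw [Finset.mem_coe, Finset.mem_product]; dsimp only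
          constructor
          · rw [Finset.mem_Icc]
            constructor
            · exact Int.floor_nonneg.mpr (by positivity)
            · have h3 : 3 * na (aa - c) / Real.pi < 3 := by
                rw [div_lt_iff₀ hπ]
                nlinarith
              have h4 : ⌊3 * na (aa - c) / Real.pi⌋ < (3:ℤ) :=
                Int.floor_lt.mpr (by push_cast; exact h3)
              omega
          · rcases hσ with h | h <;> simp [h]
        · intro aa haa bb hbb heq
          by_contra hne
          rw [Prod.mk.injEq] at heq
          obtain ⟨b1, hg1⟩ := key aa (by simpa using haa)
          obtain ⟨b2, hg2⟩ := key bb (by simpa using hbb)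
          exact near_pair hA hL hc hg1 hg2 hne heq.1 heq.2
    _ = 6 := by
        rw [Finset.card_product, Int.card_Icc]
        norm_num
        rfl

lemma Fc_card (hA : 0 < A) (hL : IsLeast (posAreaSet2 S) A) {c : Plane} (hc : c ∈ S) :
    (Fc S A c).card ≤ 12 := by
  rw [Finset.card_eq_sum_card_fiberwise
    (f := fva S A c) (t := (Fc S A c).image (fva S A c))
    (fun x hx => Finset.mem_image_of_mem _ hx)]
  calc ∑ aa ∈ (Fc S A c).image (fva S A c),
        ((Fc S A c).filter (fun T => fva S A c T = aa)).card
      ≤ ∑ aa ∈ (Fc S A c).image (fva S A c), 2 :=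
        Finset.sum_le_sum (fun aa _ => fiber_le_two hA hL c aa)
    _ = ((Fc S A c).image (fva S A c)).card * 2 := by
        rw [Finset.sum_const, smul_eq_mul]
    _ ≤ 6 * 2 := by
        have := image_le_six hA hL hc
        omega
    _ = 12 := by norm_num

end Final


/-- The number of acute triangles of minimum (nonzero) area spanned by `n`
points in the plane is `O(n)`. -/
theorem acute_min_area_triangles_linear :
    ∃ C : ℝ, 0 < C ∧ ∀ (n : ℕ) (S : Finset Plane), S.card = n →
      ∀ A : ℝ, 0 < A → IsLeast (posAreaSet2 S) A →
        (acuteAreaTripleCount2 S A : ℝ) ≤ C * n := by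
  refine ⟨12, by norm_num, ?_⟩
  intro n S hn A hA hL
  have hset : {T : Finset Plane | T ⊆ S ∧ T.card = 3 ∧
      ∃ a b c : Plane, T = {a, b, c} ∧ triArea2 a b c = A ∧ IsAcuteTriangle a b c} =
      ↑(S.powerset.filter (fun T => T.card = 3 ∧
        ∃ a b c : Plane, T = {a, b, c} ∧ triArea2 a b c = A ∧ IsAcuteTriangle a b c)) := by
    ext T
    simp only [Set.mem_setOf_eq, Finset.coe_filter, Finset.mem_powerset]
  set F := S.powerset.filter (fun T => T.card = 3 ∧
      ∃ a b c : Plane, T = {a, b, c} ∧ triArea2 a b c = A ∧ IsAcuteTriangle a b c) with hF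
  rw [acuteAreaTripleCount2, hset, Set.ncard_coe_finset]
  have hsub : S.powerset.filter (fun T => T.card = 3 ∧
      ∃ a b c : Plane, T = {a, b, c} ∧ triArea2 a b c = A ∧ IsAcuteTriangle a b c) ⊆
      S.biUnion (fun c => Fc S A c) := by
    intro T hT
    rw [Finset.mem_filter, Finset.mem_powerset] at hT
    obtain ⟨hTS, hcard, a, b, c, hTe, harea, hacute⟩ := hT
    have haS : a ∈ S := hTS (by rw [hTe]; simp)
    have hbS : b ∈ S := hTS (by rw [hTe]; simp)
    have hcS : c ∈ S := hTS (by rw [hTe]; simp)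
    obtain ⟨hab, hac, hbc⟩ := card3 (hTe ▸ hcard)
    obtain ⟨a', b', c', hc'S, heq, hgood⟩ :=
      exists_good haS hbS hcS hab hac hbc harea hacute
    apply Finset.mem_biUnion.mpr
    refine ⟨c', hc'S, ?_⟩
    rw [Fc, Finset.mem_filter, Finset.mem_powerset]
    exact ⟨hTS, a', b', by rw [hTe, ← heq], hgood⟩
  have hb1 : F.card ≤ 12 * n := by
    rw [hF]
    calc _ ≤ (S.biUnion (fun c => Fc S A c)).card := Finset.card_le_card hsub
      _ ≤ ∑ c ∈ S, (Fc S A c).card := Finset.card_biUnion_le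
      _ ≤ ∑ c ∈ S, 12 := Finset.sum_le_sum (fun c hc => Fc_card hA hL hc)
      _ = 12 * n := by rw [Finset.sum_const, smul_eq_mul, hn, mul_comm]
  calc (F.card : ℝ) ≤ ((12 * n : ℕ) : ℝ) := by exact_mod_cast hb1
    _ = 12 * n := by push_cast; ring
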